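/- arXiv:1906.09098 — 2 statements merged into one kernel-verified Lean document; each statement's English description precedes it below -/
import Mathlib

section
/- Let a > 0 and let g : ℝ → ℝ be an arbitrary function. For real numbers 0 < s < t define the 2×2 real matrix M^{[s,t]} by: M^{[s,t]} = ((0, 0), (g(t), 1)) (rows listed) if t < a, and M^{[s,t]} = 0 (the zero matrix) if t ≥ a. Then M^{[s,t]} = M^{[s,τ]} · M^{[τ,t]} for all 0 < s < τ < t. -/
/-- The family `M^{[s,t]} = !![0, 0; g(t), 1]` if `t < a` and `0` if `t ≥ a`
(for `0 < s < t`) satisfies the Chapman–Kolmogorov equation for all `0 < s < τ < t`. -/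
theorem chapman_kolmogorov_M4 (a : ℝ) (ha : 0 < a) (g : ℝ → ℝ)
    (M : ℝ → ℝ → Matrix (Fin 2) (Fin 2) ℝ)
    (hM : ∀ s t : ℝ, 0 < s → s < t → M s t = if t < a then !![0, 0; g t, 1] else 0) :
    ∀ s τ t : ℝ, 0 < s → s < τ → τ < t → M s t = M s τ * M τ t := by
  intro s τ t hs hsτ hτt
  have hτ : 0 < τ := hs.trans hsτ
  rw [hM s t hs (hsτ.trans hτt), hM s τ hs hsτ, hM τ t hτ hτt]
  by_cases ht : t < a
  · rw [if_pos ht, if_pos (hτt.trans ht)]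
    ext i j
    fin_cases i <;> fin_cases j <;>
      simp [Matrix.mul_apply, Fin.sum_univ_succ]
  · rw [if_neg ht, mul_zero]
end

section
/- Let M = (m_{ij}) be a 2×2 real matrix and let E_M be the two-dimensional real evolution algebra with structural matrix M. Then E_M is isomorphic to the evolution algebra E_4 (with structural matrix ((0,1),(0,0)), i.e. e₁e₁ = e₂, e₂e₂ = 0) if and only if M = ((0,β),(0,0)) for some real β ≠ 0 or M = ((0,0),(γ,0)) for some real γ ≠ 0. -/
/-- The evolution-algebra product on `ℝ²` determined by a structural matrix `A`:
`e_i · e_i = a_{i1} e₁ + a_{i2} e₂` and `e₁ · e₂ = e₂ · e₁ = 0`. -/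
noncomputable def evMul (A : Matrix (Fin 2) (Fin 2) ℝ) (x y : Fin 2 → ℝ) : Fin 2 → ℝ :=
  fun k => x 0 * y 0 * A 0 k + x 1 * y 1 * A 1 k

/-- Two 2-dimensional real evolution algebras (given by their structural matrices) are
isomorphic: there is a bijective linear map `φ` with `φ(x·y) = φ(x)·φ(y)`. -/
def EvIso (A B : Matrix (Fin 2) (Fin 2) ℝ) : Prop :=
  ∃ φ : (Fin 2 → ℝ) ≃ₗ[ℝ] (Fin 2 → ℝ), ∀ x y : Fin 2 → ℝ, φ (evMul A x y) = evMul B (φ x) (φ y)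


/-- Scaling equivalence `v ↦ β • v`. -/
noncomputable def scaleEquiv (β : ℝ) (hβ : β ≠ 0) : (Fin 2 → ℝ) ≃ₗ[ℝ] (Fin 2 → ℝ) where
  toFun v := fun k => β * v k
  map_add' x y := by funext k; simp [mul_add]
  map_smul' r x := by funext k; simp; ring
  invFun v := fun k => β⁻¹ * v k
  left_inv v := by
    funext k
    show β⁻¹ * (β * v k) = v k
    rw [← mul_assoc, inv_mul_cancel₀ hβ, one_mul]
  right_inv v := by
    funext k
    show β * (β⁻¹ * v k) = v k
    rw [← mul_assoc, mul_inv_cancel₀ hβ, one_mul]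

/-- Swap-and-scale equivalence `v ↦ (γ v₁, γ v₀)`. -/
noncomputable def swapScaleEquiv (γ : ℝ) (hγ : γ ≠ 0) : (Fin 2 → ℝ) ≃ₗ[ℝ] (Fin 2 → ℝ) where
  toFun v := ![γ * v 1, γ * v 0]
  map_add' x y := by funext k; fin_cases k <;> simp <;> ring
  map_smul' r x := by funext k; fin_cases k <;> simp <;> ring
  invFun v := ![γ⁻¹ * v 1, γ⁻¹ * v 0]
  left_inv v := by
    funext k; fin_cases k <;>
      simp [← mul_assoc, inv_mul_cancel₀ hγ]
  right_inv v := by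
    funext k; fin_cases k <;>
      simp [← mul_assoc, mul_inv_cancel₀ hγ]

/-- `E_M ≅ E₄` iff `M = !![0,β;0,0]` with `β ≠ 0` or `M = !![0,0;γ,0]` with `γ ≠ 0`. -/
theorem iso_to_E4_iff (M : Matrix (Fin 2) (Fin 2) ℝ) :
    EvIso M !![0, 1; 0, 0] ↔
      (∃ β : ℝ, β ≠ 0 ∧ M = !![0, β; 0, 0]) ∨ (∃ γ : ℝ, γ ≠ 0 ∧ M = !![0, 0; γ, 0]) := by
  constructor
  · rintro ⟨φ, hφ⟩
    set e1 : Fin 2 → ℝ := ![1, 0] with he1def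
    set e2 : Fin 2 → ℝ := ![0, 1] with he2def
    have he1ne : e1 ≠ 0 := by
      intro h
      have := congrFun h 0
      simp [he1def] at this
    have he2ne : e2 ≠ 0 := by
      intro h
      have := congrFun h 1
      simp [he2def] at this
    have hv10 : e1 0 = 1 := rfl
    have hv11 : e1 1 = 0 := rfl
    have hv20 : e2 0 = 0 := rfl
    have hv21 : e2 1 = 1 := rfl
    set a := φ e1 0 with ha
    set b := φ e1 1 with hb
    set c := φ e2 0 with hc
    set d := φ e2 1 with hd
    -- product of basis vectors under M
    have hm11 : evMul M e1 e1 = M 0 0 • e1 + M 0 1 • e2 := by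
      funext k; fin_cases k <;> simp [evMul, he1def, he2def]
    have hm22 : evMul M e2 e2 = M 1 0 • e1 + M 1 1 • e2 := by
      funext k; fin_cases k <;> simp [evMul, he1def, he2def]
    have hm12 : evMul M e1 e2 = 0 := by
      funext k; fin_cases k <;> simp [evMul, he1def, he2def]
    have h1 := hφ e1 e1
    have h2 := hφ e2 e2
    have h3 := hφ e1 e2
    rw [hm11, map_add, map_smul, map_smul] at h1
    rw [hm22, map_add, map_smul, map_smul] at h2
    rw [hm12, map_zero] at h3
    -- coordinate equations
    have e11_0 : M 0 0 * a + M 0 1 * c = 0 := by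
      have := congrFun h1 0
      simpa [evMul, hv20, hv21, ← ha, ← hc] using this
    have e11_1 : M 0 0 * b + M 0 1 * d = a * a := by
      have := congrFun h1 1
      simpa [evMul, hv20, hv21, ← ha, ← hb, ← hd] using this
    have e22_0 : M 1 0 * a + M 1 1 * c = 0 := by
      have := congrFun h2 0
      simpa [evMul, hv20, hv21, ← ha, ← hc] using this
    have e22_1 : M 1 0 * b + M 1 1 * d = c * c := by
      have := congrFun h2 1
      simpa [evMul, hv20, hv21, ← hb, ← hc, ← hd] using this
    have hac : a * c = 0 := by
      have := congrFun h3 1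
      simpa [evMul, hv20, hv21, ← ha, ← hc] using this
    -- nonvanishing of images
    have hφe1 : ¬ (a = 0 ∧ b = 0) := by
      rintro ⟨h0, h1'⟩
      apply he1ne
      apply φ.injective
      rw [map_zero φ]
      funext k; fin_cases k
      · exact h0
      · exact h1'
    have hφe2 : ¬ (c = 0 ∧ d = 0) := by
      rintro ⟨h0, h1'⟩
      apply he2ne
      apply φ.injective
      rw [map_zero φ]
      funext k; fin_cases k
      · exact h0
      · exact h1'
    rcases mul_eq_zero.mp hac with ha0 | hc0
    · -- a = 0 : right branch
      right
      have hbne : b ≠ 0 := fun hb0 => hφe1 ⟨ha0, hb0⟩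
      have hcne : c ≠ 0 := by
        intro hc0
        -- then φ e1 and φ e2 are dependent
        have hdep : φ (d • e1 - b • e2) = 0 := by
          rw [map_sub, map_smul, map_smul]
          funext k; fin_cases k
          · simp [← ha, ← hc, ha0, hc0]
          · simp [← hb, ← hd]; ring
        have := φ.injective (hdep.trans (map_zero φ).symm)
        have hd0 : d = 0 := by
          have := congrFun this 0
          simpa [he1def, he2def] using this
        have hb0 : b = 0 := by
          have := congrFun this 1
          have h' : d * 0 - b * 1 = 0 := by simpa [he1def, he2def] using this
          linarith
        exact hφe1 ⟨ha0, hb0⟩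
      have hM01 : M 0 1 = 0 := by
        have : M 0 1 * c = 0 := by rw [ha0] at e11_0; linarith
        exact (mul_eq_zero.mp this).resolve_right hcne
      have hM00 : M 0 0 = 0 := by
        have : M 0 0 * b = 0 := by rw [ha0, hM01] at e11_1; ring_nf at e11_1 ⊢; linarith
        exact (mul_eq_zero.mp this).resolve_right hbne
      have hM11 : M 1 1 = 0 := by
        have : M 1 1 * c = 0 := by rw [ha0] at e22_0; linarith
        exact (mul_eq_zero.mp this).resolve_right hcne
      have hM10 : M 1 0 * b = c * c := by rw [hM11] at e22_1; linarith
      have hM10ne : M 1 0 ≠ 0 := by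
        intro h0
        rw [h0, zero_mul] at hM10
        exact hcne (by nlinarith)
      refine ⟨M 1 0, hM10ne, ?_⟩
      ext i j
      fin_cases i <;> fin_cases j <;> simp [hM00, hM01, hM11]
    · -- c = 0 : left branch
      left
      have hane : a ≠ 0 := by
        intro ha0
        have hdep : φ (d • e1 - b • e2) = 0 := by
          rw [map_sub, map_smul, map_smul]
          funext k; fin_cases k
          · simp [← ha, ← hc, ha0, hc0]
          · simp [← hb, ← hd]; ring
        have := φ.injective (hdep.trans (map_zero φ).symm)
        have hd0 : d = 0 := by
          have := congrFun this 0
          simpa [he1def, he2def] using this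
        exact hφe2 ⟨hc0, hd0⟩
      have hdne : d ≠ 0 := fun hd0 => hφe2 ⟨hc0, hd0⟩
      have hM00 : M 0 0 = 0 := by
        have : M 0 0 * a = 0 := by rw [hc0] at e11_0; linarith
        exact (mul_eq_zero.mp this).resolve_right hane
      have hM10 : M 1 0 = 0 := by
        have : M 1 0 * a = 0 := by rw [hc0] at e22_0; linarith
        exact (mul_eq_zero.mp this).resolve_right hane
      have hM11 : M 1 1 = 0 := by
        have : M 1 1 * d = 0 := by rw [hM10, hc0] at e22_1; ring_nf at e22_1 ⊢; linarith
        exact (mul_eq_zero.mp this).resolve_right hdne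
      have hM01 : M 0 1 * d = a * a := by rw [hM00] at e11_1; linarith
      have hM01ne : M 0 1 ≠ 0 := by
        intro h0
        rw [h0, zero_mul] at hM01
        exact hane (by nlinarith)
      refine ⟨M 0 1, hM01ne, ?_⟩
      ext i j
      fin_cases i <;> fin_cases j <;> simp [hM00, hM10, hM11]
  · rintro (⟨β, hβ, rfl⟩ | ⟨γ, hγ, rfl⟩)
    · refine ⟨scaleEquiv β hβ, fun x y => ?_⟩
      funext k
      fin_cases k <;> simp [evMul, scaleEquiv] <;> ring
    · refine ⟨swapScaleEquiv γ hγ, fun x y => ?_⟩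
      funext k
      fin_cases k <;> simp [evMul, swapScaleEquiv] <;> ring
end
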